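/- For positive integers a < b with gcd(a,b) = 1, the maximum size of a subset of {1,2,...,n} containing no pair (x,y) with bx = ay equals (b/(b+1))n + O(log n). -/

import Mathlib

open Finset


private def vv (b : ℕ) (n : ℕ) : ℕ :=
  if h : 2 ≤ b ∧ b ∣ n ∧ n ≠ 0 then vv b (n / b) + 1 else 0
termination_by n
decreasing_by exact Nat.div_lt_self (Nat.pos_of_ne_zero h.2.2) h.1

private lemma vv_mul_left {b : ℕ} (hb : 2 ≤ b) (m : ℕ) (hm : m ≠ 0) :
    vv b (b * m) = vv b m + 1 := by
  rw [vv, dif_pos ⟨hb, Dvd.intro m rfl, mul_ne_zero (by omega) hm⟩,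
    Nat.mul_div_cancel_left m (by omega)]

private lemma vv_succ_of {b x : ℕ} (hx : vv b x ≠ 0) :
    b ∣ x ∧ x ≠ 0 ∧ vv b x = vv b (x / b) + 1 := by
  by_cases h : 2 ≤ b ∧ b ∣ x ∧ x ≠ 0
  · exact ⟨h.2.1, h.2.2, by rw [vv, dif_pos h]⟩
  · rw [vv, dif_neg h] at hx; omega

private lemma vv_coprime {a b : ℕ} (hb : 2 ≤ b) (ha : a ≠ 0) (hco : Nat.Coprime a b) :
    ∀ m, vv b (a * m) = vv b m := by
  intro m
  induction m using Nat.strong_induction_on with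
  | _ m ih =>
    by_cases hm0 : m = 0
    · subst hm0; rw [mul_zero]
    by_cases hd : b ∣ m
    · obtain ⟨k, rfl⟩ := hd
      have hk0 : k ≠ 0 := by rintro rfl; simp at hm0
      have hbig : a * (b * k) = b * (a * k) := by ring
      rw [hbig, vv_mul_left hb (a * k) (mul_ne_zero ha hk0),
        vv_mul_left hb k hk0, ih k (by nlinarith [Nat.pos_of_ne_zero hk0])]
    · have hd' : ¬ b ∣ a * m := by
        intro h
        exact hd (Nat.Coprime.dvd_of_dvd_mul_left (Nat.coprime_comm.mp hco) h)
      rw [vv, dif_neg (by tauto), vv, dif_neg (by tauto)]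

private def EE (b n : ℕ) : ℕ := ((Icc 1 n).filter fun x => Even (vv b x)).card

private lemma EE_zero (b : ℕ) : EE b 0 = 0 := by simp [EE]

private lemma EE_add {b : ℕ} (hb : 2 ≤ b) (n : ℕ) : EE b n + EE b (n / b) = n := by
  have hbpos : 0 < b := by omega
  have h2 : ((Icc 1 n).filter fun x => ¬ Even (vv b x)).card
      = ((Icc 1 (n / b)).filter fun x => Even (vv b x)).card := by
    apply Finset.card_bij' (fun x _ => x / b) (fun m _ => b * m)
    · intro x hx
      simp only [mem_filter, mem_Icc] at hx ⊢
      obtain ⟨⟨hx1, hxn⟩, hodd⟩ := hx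
      obtain ⟨hdvd, hx0, heq⟩ := vv_succ_of (b := b) (x := x)
        (fun h0 => hodd (by rw [h0]; exact Even.zero))
      refine ⟨⟨(Nat.one_le_div_iff hbpos).mpr (Nat.le_of_dvd (by omega) hdvd),
        Nat.div_le_div_right hxn⟩, ?_⟩
      rw [heq] at hodd
      simpa [Nat.even_add_one] using hodd
    · intro m hm
      simp only [mem_filter, mem_Icc] at hm ⊢
      obtain ⟨⟨hm1, hmn⟩, hev⟩ := hm
      have hbm : b * m ≤ n := by
        rw [mul_comm]; exact (Nat.le_div_iff_mul_le hbpos).mp hmn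
      refine ⟨⟨by nlinarith, hbm⟩, ?_⟩
      rw [vv_mul_left hb m (by omega)]
      simp [Nat.even_add_one, hev]
    · intro x hx
      simp only [mem_filter, mem_Icc] at hx
      obtain ⟨hdvd, hx0, heq⟩ := vv_succ_of (b := b) (x := x)
        (fun h0 => hx.2 (by rw [h0]; exact Even.zero))
      exact Nat.mul_div_cancel' hdvd
    · intro m hm
      exact Nat.mul_div_cancel_left m hbpos
  have h1 := Finset.card_filter_add_card_filter_not
    (s := Icc 1 n) (p := fun x => Even (vv b x))
  rw [h2] at h1
  simp only [Nat.card_Icc] at h1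
  unfold EE
  omega

private lemma EE_bound {b : ℕ} (hb : 2 ≤ b) :
    ∀ n : ℕ, 1 ≤ n →
      |(EE b n : ℝ) - (b : ℝ) / (b + 1) * n| ≤ Real.logb b n + 1 := by
  intro n
  induction n using Nat.strong_induction_on with
  | _ n ih =>
    intro hn1
    have hbR : (1:ℝ) < b := by exact_mod_cast (by omega : 1 < b)
    have hbR0 : (0:ℝ) < b := by linarith
    have hb1 : (0:ℝ) < (b:ℝ) + 1 := by linarith
    have hkey : (EE b n : ℝ) + (EE b (n / b) : ℝ) = n := by
      exact_mod_cast congrArg (Nat.cast : ℕ → ℝ) (EE_add hb n)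
    by_cases h0 : n / b = 0
    · rw [h0, EE_zero, Nat.cast_zero, add_zero] at hkey
      have hnb : n < b := by
        by_contra h
        have := (Nat.one_le_div_iff (show 0 < b by omega)).mpr (not_lt.mp h)
        omega
      have hnbR : (n:ℝ) ≤ (b:ℝ) - 1 := by
        have : (n:ℝ) + 1 ≤ b := by exact_mod_cast hnb
        linarith
      have hlognn : 0 ≤ Real.logb b n :=
        Real.logb_nonneg hbR (by exact_mod_cast hn1)
      rw [hkey]
      rw [abs_of_nonneg (by
        rw [div_mul_eq_mul_div, sub_nonneg, div_le_iff₀ hb1]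
        nlinarith [Nat.cast_nonneg (α := ℝ) n])]
      rw [div_mul_eq_mul_div]
      rw [sub_le_iff_le_add]
      have heq : (n:ℝ) - (b:ℝ) * n / (b+1) = n / (b+1) := by field_simp; ring
      have h7 : (n:ℝ)/(b+1) ≤ 1 := by
        rw [div_le_one hb1]; linarith
      linarith
    · have h1 : 1 ≤ n / b := Nat.pos_of_ne_zero h0
      have hlt : n / b < n := Nat.div_lt_self (by omega) (by omega)
      have ihb := ih (n / b) hlt h1
      set f : ℝ := ((n / b : ℕ) : ℝ) with hf
      have hf1 : (1:ℝ) ≤ f := by rw [hf]; exact_mod_cast h1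
      have hfle : f ≤ (n:ℝ) / b := Nat.cast_div_le
      have hflt : (n:ℝ) / b < f + 1 := by
        rw [div_lt_iff₀ hbR0]
        have h := Nat.div_add_mod n b
        have h2 := Nat.mod_lt n (show 0 < b by omega)
        have hcast : (b:ℝ) * f + ((n % b : ℕ) : ℝ) = n := by
          rw [hf]; exact_mod_cast h
        have h2' : ((n % b : ℕ) : ℝ) < b := by exact_mod_cast h2
        nlinarith
      have hlogf : Real.logb b f ≤ Real.logb b n - 1 := by
        have hm : Real.logb b f ≤ Real.logb b ((n:ℝ)/b) :=
          (Real.logb_le_logb hbR (by linarith) (by positivity)).mpr hfle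
        have hd : Real.logb b ((n:ℝ)/b) = Real.logb b n - 1 := by
          rw [Real.logb_div (by positivity) (by positivity), Real.logb_self_eq_one hbR]
        linarith
      -- main estimate
      have hEEf : (EE b n : ℝ) = n - (EE b (n/b) : ℝ) := by linarith
      set D : ℝ := (EE b (n/b) : ℝ) - (b:ℝ)/(b+1) * f with hD
      have hDle : |D| ≤ Real.logb b n := by
        calc |D| ≤ Real.logb b f + 1 := ihb
          _ ≤ Real.logb b n := by linarith
      have hG : (EE b n : ℝ) - (b:ℝ)/(b+1)*n
          = ((n:ℝ)/(b+1) - (b:ℝ)/(b+1) * f) - D := by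
        rw [hEEf, hD]
        field_simp
        ring
      have hG0 : 0 ≤ (n:ℝ)/(b+1) - (b:ℝ)/(b+1) * f := by
        rw [sub_nonneg, div_mul_eq_mul_div, div_le_div_iff₀ hb1 hb1]
        have : (b:ℝ) * f ≤ n := by
          rw [← le_div_iff₀' hbR0]; exact hfle
        nlinarith
      have hG1 : (n:ℝ)/(b+1) - (b:ℝ)/(b+1) * f ≤ 1 := by
        rw [div_mul_eq_mul_div, div_sub_div_same, div_le_one hb1]
        have : (n:ℝ) < (b:ℝ) * (f + 1) := by
          rw [← div_lt_iff₀' hbR0]; exact hflt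
        nlinarith
      rw [hG]
      calc |((n:ℝ)/(b+1) - (b:ℝ)/(b+1) * f) - D|
          ≤ |(n:ℝ)/(b+1) - (b:ℝ)/(b+1) * f| + |D| := abs_sub _ _
        _ ≤ 1 + Real.logb b n := by
            rw [abs_of_nonneg hG0]; linarith
        _ = Real.logb b n + 1 := by ring

set_option maxHeartbeats 1000000 in
/-- For positive integers `a < b` with `gcd(a,b) = 1`, the maximum size of a subset of
`{1,...,n}` containing no pair `(x,y)` with `b*x = a*y` (i.e. `(b/a)x = y`) equals
`(b/(b+1))·n + O(log n)`. -/
theorem stmt0 (a b : ℕ) (ha : 0 < a) (hab : a < b) (hco : Nat.Coprime a b) :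
    ∃ C : ℝ, 0 < C ∧ ∀ n : ℕ, 2 ≤ n →
      (∃ A ⊆ Finset.Icc 1 n, (∀ x ∈ A, ∀ y ∈ A, b * x ≠ a * y) ∧
        ((b : ℝ) / (b + 1)) * n - C * Real.log n ≤ A.card) ∧
      (∀ A ⊆ Finset.Icc 1 n, (∀ x ∈ A, ∀ y ∈ A, b * x ≠ a * y) →
        (A.card : ℝ) ≤ ((b : ℝ) / (b + 1)) * n + C * Real.log n) := by
  classical
  have hb2 : 2 ≤ b := by omega
  have hbpos : 0 < b := by omega
  have ha0 : a ≠ 0 := by omega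
  have hbR : (1:ℝ) < b := by exact_mod_cast (by omega : 1 < b)
  have hb1 : (0:ℝ) < (b:ℝ) + 1 := by linarith
  have hlog2 : 0 < Real.log 2 := Real.log_pos (by norm_num)
  refine ⟨3 / Real.log 2, by positivity, ?_⟩
  intro n hn
  have hn1R : (1:ℝ) ≤ n := by exact_mod_cast (by omega : 1 ≤ n)
  have hnR : (2:ℝ) ≤ n := by exact_mod_cast hn
  have hlogn2 : Real.log 2 ≤ Real.log n := Real.log_le_log (by norm_num) hnR
  have hlognpos : 0 < Real.log n := lt_of_lt_of_le hlog2 hlogn2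
  have hlogb2 : Real.log 2 ≤ Real.log b := Real.log_le_log (by norm_num) (by exact_mod_cast hb2)
  have hquot : (1:ℝ) ≤ Real.log n / Real.log 2 := (one_le_div hlog2).mpr hlogn2
  have hlogb_le : ∀ m : ℕ, m ≤ n → Real.logb b m ≤ Real.log n / Real.log 2 := by
    intro m hm
    rw [Real.logb]
    apply div_le_div₀ (Real.log_natCast_nonneg n) ?_ hlog2 hlogb2
    rcases Nat.eq_zero_or_pos m with rfl | hm0
    · simpa using Real.log_nonneg hn1R
    · exact Real.log_le_log (by exact_mod_cast hm0) (by exact_mod_cast hm)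
  have hCeq : ∀ x : ℝ, 3 / Real.log 2 * x = 3 * (x / Real.log 2) := by
    intro x; field_simp
  constructor
  · -- lower bound: construction
    refine ⟨(Icc 1 n).filter (fun x => Even (vv b x)), filter_subset _ _, ?_, ?_⟩
    · intro x hx y hy hxy
      simp only [mem_filter, mem_Icc] at hx hy
      have hx1 : x ≠ 0 := by omega
      have hvv : vv b (b * x) = vv b (a * y) := by rw [hxy]
      rw [vv_mul_left hb2 x hx1, vv_coprime hb2 ha0 hco y] at hvv
      obtain ⟨⟨_, _⟩, hex⟩ := hx
      obtain ⟨⟨_, _⟩, hey⟩ := hy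
      rw [Nat.even_iff] at hex hey
      omega
    · have hbd := EE_bound hb2 n (by omega)
      have h1 : (b:ℝ)/(b+1) * n - (Real.logb b n + 1) ≤ (EE b n : ℝ) := by
        have := abs_le.mp hbd
        linarith [this.1]
      have h2 : Real.logb b n + 1 ≤ 3 / Real.log 2 * Real.log n := by
        rw [hCeq]
        have := hlogb_le n le_rfl
        linarith
      show (b:ℝ)/(b+1) * n - 3 / Real.log 2 * Real.log n ≤ ((EE b n : ℕ) : ℝ)
      unfold EE
      unfold EE at h1
      linarith
  · -- upper bound
    intro A hA hcond
    have hAn : A.card ≤ n := by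
      have := Finset.card_le_card hA
      simpa [Nat.card_Icc] using this
    have hinj : EE b (n / b) ≤ n - A.card := by
      have hcard : ((Icc 1 n) \ A).card = n - A.card := by
        rw [Finset.card_sdiff_of_subset hA, Nat.card_Icc]
        omega
      rw [← hcard]
      unfold EE
      apply Finset.card_le_card_of_injOn (fun m => if a * m ∈ A then b * m else a * m)
      · intro m hm
        simp only [mem_coe, mem_filter, mem_Icc] at hm ⊢
        obtain ⟨⟨hm1, hmn⟩, hev⟩ := hm
        have hbm : b * m ≤ n := by
          rw [mul_comm]; exact (Nat.le_div_iff_mul_le hbpos).mp hmn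
        have ham : a * m ≤ n := le_trans (Nat.mul_le_mul_right m (by omega)) hbm
        by_cases h : a * m ∈ A
        · rw [if_pos h, mem_sdiff, mem_Icc]
          refine ⟨⟨by nlinarith, hbm⟩, fun hbA => ?_⟩
          exact hcond (a * m) h (b * m) hbA (by ring)
        · rw [if_neg h, mem_sdiff, mem_Icc]
          exact ⟨⟨by nlinarith, ham⟩, h⟩
      · intro m hm m' hm' heq
        simp only [coe_filter, Set.mem_setOf_eq, mem_Icc] at hm hm'
        obtain ⟨⟨hm1, _⟩, hev⟩ := hm
        obtain ⟨⟨hm1', _⟩, hev'⟩ := hm'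
        have hmix : ∀ u u' : ℕ, 1 ≤ u → 1 ≤ u' → Even (vv b u) → Even (vv b u') →
            b * u ≠ a * u' := by
          intro u u' hu hu' heu heu' hbad
          have : vv b (b * u) = vv b (a * u') := by rw [hbad]
          rw [vv_mul_left hb2 u (by omega), vv_coprime hb2 ha0 hco u'] at this
          rw [Nat.even_iff] at heu heu'
          omega
        dsimp only at heq
        by_cases h : a * m ∈ A <;> by_cases h' : a * m' ∈ A
        · rw [if_pos h, if_pos h'] at heq
          exact Nat.eq_of_mul_eq_mul_left hbpos heq
        · rw [if_pos h, if_neg h'] at heq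
          exact absurd heq (hmix m m' hm1 hm1' hev hev')
        · rw [if_neg h, if_pos h'] at heq
          exact absurd heq.symm (hmix m' m hm1' hm1 hev' hev)
        · rw [if_neg h, if_neg h'] at heq
          exact Nat.eq_of_mul_eq_mul_left ha heq
    have hmain : (A.card : ℝ) ≤ (n : ℝ) - (EE b (n / b) : ℝ) := by
      have : A.card + EE b (n / b) ≤ n := by omega
      have := (Nat.cast_le (α := ℝ)).mpr this
      push_cast at this
      linarith
    by_cases h0 : n / b = 0
    · rw [h0, EE_zero, Nat.cast_zero, sub_zero] at hmain
      have hnb : n < b := by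
        by_contra h
        have := (Nat.one_le_div_iff hbpos).mpr (not_lt.mp h)
        omega
      have hnbR : (n:ℝ) < b := by exact_mod_cast hnb
      have hfrac : (n:ℝ) - (b:ℝ)/(b+1) * n = n / (b+1) := by field_simp; ring
      have hlt1 : (n:ℝ) / (b+1) ≤ 1 := by
        rw [div_le_one hb1]; linarith
      have hC : (1:ℝ) ≤ 3 / Real.log 2 * Real.log n := by
        rw [hCeq]; linarith
      linarith
    · have h1 : 1 ≤ n / b := Nat.pos_of_ne_zero h0
      have hbd := EE_bound hb2 (n / b) h1
      obtain ⟨f, hf⟩ : ∃ f : ℝ, f = ((n / b : ℕ) : ℝ) := ⟨_, rfl⟩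
      rw [← hf] at hbd
      have hfle : f ≤ (n:ℝ) / b := by rw [hf]; exact Nat.cast_div_le
      have hflt : (n:ℝ) / b < f + 1 := by
        rw [div_lt_iff₀ (by linarith : (0:ℝ) < b)]
        have h := Nat.div_add_mod n b
        have h2 := Nat.mod_lt n hbpos
        have hcast : (b:ℝ) * f + ((n % b : ℕ) : ℝ) = n := by
          rw [hf]; exact_mod_cast h
        have h2' : ((n % b : ℕ) : ℝ) < b := by exact_mod_cast h2
        nlinarith
      have hEge : (b:ℝ)/(b+1) * f - (Real.logb b f + 1) ≤ (EE b (n/b) : ℝ) := by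
        have := abs_le.mp hbd
        linarith [this.1]
      have hlogf : Real.logb b f ≤ Real.log n / Real.log 2 := by
        rw [hf]
        exact hlogb_le (n/b) (le_trans (Nat.div_le_self n b) le_rfl)
      -- n - E(n/b) ≤ n - (b/(b+1)) f + logb f + 1
      have hstep : (A.card : ℝ) ≤ (n:ℝ) - (b:ℝ)/(b+1) * f + Real.logb b f + 1 := by
        have hmain' : (A.card : ℝ) ≤ (n : ℝ) - (EE b (n / b) : ℝ) := hmain
        linarith
      have hr1 : (b:ℝ)/(b+1) ≤ 1 := by
        rw [div_le_one hb1]; linarith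
      have hr0 : (0:ℝ) ≤ (b:ℝ)/(b+1) := by positivity
      have hkey2 : (n:ℝ) - (b:ℝ)/(b+1) * f ≤ (b:ℝ)/(b+1) * n + 1 := by
        have hgf : (n:ℝ)/b - 1 ≤ f := by linarith
        have hrf : (b:ℝ)/(b+1) * ((n:ℝ)/b - 1) ≤ (b:ℝ)/(b+1) * f :=
          mul_le_mul_of_nonneg_left hgf hr0
        have heq2 : (n:ℝ) - (b:ℝ)/(b+1) * ((n:ℝ)/b - 1)
            = (b:ℝ)/(b+1) * n + (b:ℝ)/(b+1) := by
          field_simp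
          ring
        linarith
      have hfinal : Real.logb b f + 2 ≤ 3 / Real.log 2 * Real.log n := by
        rw [hCeq]
        linarith [hlogf, hquot]
      linarith [hstep, hkey2, hfinal]
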